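/- Suppose that E ⊆ ℂ is a path-connected set admitting an L-Lipschitz mean. If z₀ ∈ ℂ \ E and a, b ∈ E satisfy L·|a − b| ≤ dist(z₀, E) := inf_{w∈E} |z₀ − w|, then there is a continuous curve γ : [0,2] → E with γ(0) = a and γ(2) = b such that for every continuous function h : [0,2] → ℝ satisfying γ(t) − z₀ = |γ(t) − z₀|·exp(i·h(t)) for all t, there exists an integer k with |h(2) − h(0) − 4πk| ≤ 2π/3. -/

import Mathlib

open Real

lemma cos_half_round (x : ℝ) (hx : (1:ℝ)/2 ≤ Real.cos x) :
    |x - 2*π*(round (x/(2*π)) : ℤ)| ≤ π/3 := by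
  have hπ := Real.pi_pos
  set k : ℤ := round (x/(2*π)) with hk
  set y : ℝ := x - 2*π*k with hy
  have h2π : (0:ℝ) < 2*π := by linarith
  have h1 : |y| ≤ π := by
    have h := abs_sub_round (x/(2*π))
    rw [← hk, show x/(2*π) - (k:ℝ) = y/(2*π) by rw [hy]; field_simp] at h
    rw [abs_div, abs_of_pos h2π, div_le_iff₀ h2π] at h
    linarith
  have hcosy : (1:ℝ)/2 ≤ Real.cos y := by
    have : Real.cos y = Real.cos x := by
      rw [hy, show x - 2*π*k = x - k*(2*π) by ring, Real.cos_sub_int_mul_two_pi]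
    rw [this]; exact hx
  by_contra hcon
  push_neg at hcon
  have h3 : Real.cos |y| < Real.cos (π/3) :=
    Real.strictAntiOn_cos ⟨by positivity, by linarith⟩ ⟨abs_nonneg _, h1⟩ hcon
  rw [Real.cos_abs, Real.cos_pi_div_three] at h3
  linarith

lemma key_cos (d : ℝ) (hd : 0 ≤ d) (u v : ℂ) (hu : u ≠ 0) (hv : v ≠ 0)
    (hud : d ≤ ‖u‖) (hvd : d ≤ ‖v‖)
    (huv : ‖u - v‖ ≤ d) (h₀ h₁ : ℝ)
    (hu' : u = (‖u‖ : ℂ) * Complex.exp ((h₀:ℂ) * Complex.I))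
    (hv' : v = (‖v‖ : ℂ) * Complex.exp ((h₁:ℂ) * Complex.I)) :
    (1:ℝ)/2 ≤ Real.cos (h₁ - h₀) := by
  set A := ‖u‖ with hA
  set B := ‖v‖ with hB
  have hA0 : 0 < A := by simpa [hA] using norm_pos_iff.mpr hu
  have hB0 : 0 < B := by simpa [hB] using norm_pos_iff.mpr hv
  have hconj : (starRingEnd ℂ) u = (A:ℂ) * Complex.exp (-(h₀:ℂ) * Complex.I) := by
    rw [hu', map_mul, ← Complex.exp_conj]
    simp [Complex.conj_ofReal]
  have hkey : v * (starRingEnd ℂ) u = ((A*B : ℝ):ℂ) * Complex.exp (((h₁ - h₀ : ℝ):ℂ) * Complex.I) := by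
    rw [hv', hconj,
      show ((h₁ - h₀:ℝ):ℂ) * Complex.I = (h₁:ℂ)*Complex.I + (-(h₀:ℂ))*Complex.I by push_cast; ring,
      Complex.exp_add]
    push_cast
    ring
  have hre : (v * (starRingEnd ℂ) u).re = A * B * Real.cos (h₁ - h₀) := by
    rw [hkey, Complex.re_ofReal_mul, Complex.exp_ofReal_mul_I_re]
  have hid : Complex.normSq (v - u) = Complex.normSq v + Complex.normSq u
      - 2 * (v * (starRingEnd ℂ) u).re := Complex.normSq_sub v u
  have habs : ‖v - u‖ ≤ d := by rwa [norm_sub_rev]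
  have hsq : ‖v - u‖ ^ 2 ≤ d ^ 2 :=
    pow_le_pow_left₀ (norm_nonneg _) habs 2
  have hdab : d ^ 2 ≤ A * B := by nlinarith
  have h1 : A * B / 2 ≤ (v * (starRingEnd ℂ) u).re := by
    have e1 : ‖v-u‖ ^ 2 = Complex.normSq (v-u) := Complex.sq_norm _
    have e2 : A ^ 2 = Complex.normSq u := Complex.sq_norm _
    have e3 : B ^ 2 = Complex.normSq v := Complex.sq_norm _
    nlinarith [sq_nonneg (A - B)]
  rw [hre] at h1
  nlinarith [mul_pos hA0 hB0]

theorem lipschitz_mean_planar_argument_obstruction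
    (E : Set ℂ) (hE : IsPathConnected E)
    (L : ℝ) (hL : 0 ≤ L) (μ : E → E → E)
    (hsym : ∀ a b : E, μ a b = μ b a)
    (hidem : ∀ a : E, μ a a = a)
    (hlip : ∀ a b a' b' : E, dist (μ a b) (μ a' b') ≤ L * (dist a a' + dist b b'))
    (z₀ : ℂ) (hz₀ : z₀ ∉ E) (a b : ℂ) (ha : a ∈ E) (hb : b ∈ E)
    (hsmall : L * ‖a - b‖ ≤ Metric.infDist z₀ E) :
    ∃ γ : ℝ → ℂ, ContinuousOn γ (Set.Icc 0 2) ∧ Set.MapsTo γ (Set.Icc 0 2) E ∧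
      γ 0 = a ∧ γ 2 = b ∧
      ∀ h : ℝ → ℝ, ContinuousOn h (Set.Icc 0 2) →
        (∀ t ∈ Set.Icc (0 : ℝ) 2,
          γ t - z₀ = (‖γ t - z₀‖ : ℂ) * Complex.exp ((h t : ℂ) * Complex.I)) →
        ∃ k : ℤ, |h 2 - h 0 - 4 * π * k| ≤ 2 * π / 3 := by
  have hπ := Real.pi_pos
  obtain ⟨p, hp⟩ := hE.joinedIn a ha b hb
  have hext : ∀ t : ℝ, p.extend t ∈ E := by
    intro t
    show Set.IccExtend zero_le_one (⇑p) t ∈ E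
    rw [Set.IccExtend]
    exact hp _
  set q : ℝ → E := fun t => ⟨p.extend t, hext t⟩ with hqdef
  have hq : Continuous q := p.continuous_extend.subtype_mk _
  have q0 : q 0 = ⟨a, ha⟩ := Subtype.ext (by simp [hqdef])
  have q1 : q 1 = ⟨b, hb⟩ := Subtype.ext (by simp [hqdef])
  set F : E × E → ℂ := fun x => ↑(μ x.1 x.2) with hFdef
  have hF : Continuous F := by
    have hlipF : LipschitzWith (2*L).toNNReal F := by
      apply LipschitzWith.of_dist_le_mul
      intro x y
      have h1 : dist (F x) (F y) = dist (μ x.1 x.2) (μ y.1 y.2) := (Subtype.dist_eq _ _).symm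
      have h2 : dist x.1 y.1 ≤ dist x y := by rw [Prod.dist_eq]; exact le_max_left _ _
      have h3 : dist x.2 y.2 ≤ dist x y := by rw [Prod.dist_eq]; exact le_max_right _ _
      have h4 : ((2*L).toNNReal : ℝ) = 2*L := Real.coe_toNNReal _ (by positivity)
      rw [h1, h4]
      calc dist (μ x.1 x.2) (μ y.1 y.2) ≤ L * (dist x.1 y.1 + dist x.2 y.2) := hlip _ _ _ _
        _ ≤ L * (dist x y + dist x y) := by
            apply mul_le_mul_of_nonneg_left (by linarith) hL
        _ = 2*L * dist x y := by ring
    exact hlipF.continuous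
  set γ : ℝ → ℂ := fun t => F (q (min t 1), q (max (t-1) 0)) with hγdef
  have hγcont : Continuous γ := by
    apply hF.comp
    exact (hq.comp (continuous_id.min continuous_const)).prodMk
      (hq.comp ((continuous_id.sub continuous_const).max continuous_const))
  refine ⟨γ, hγcont.continuousOn, fun t _ => (μ _ _).2, ?_, ?_, ?_⟩
  · show F (q (min 0 1), q (max (0-1) 0)) = a
    norm_num [hFdef, q0, hidem]
  · show F (q (min 2 1), q (max (2-1) 0)) = b
    norm_num [hFdef, q1, hidem]
  intro h hhcont hharg
  set d : ℝ := Metric.infDist z₀ E with hddef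
  have hd0 : 0 ≤ d := Metric.infDist_nonneg
  -- basic facts about γ on [0,2]
  have hγE : ∀ s : ℝ, γ s ∈ E := fun s => (μ _ _).2
  have hγne : ∀ s : ℝ, γ s - z₀ ≠ 0 := by
    intro s
    rw [sub_ne_zero]
    intro hc
    exact hz₀ (hc ▸ hγE s)
  have hγd : ∀ s : ℝ, d ≤ ‖γ s - z₀‖ := by
    intro s
    have := Metric.infDist_le_dist_of_mem (x := z₀) (hγE s)
    rwa [Complex.dist_eq, norm_sub_rev] at this
  -- formulas for γ on the two halves
  have hγ1 : ∀ t ∈ Set.Icc (0:ℝ) 1, γ t = ↑(μ (q t) (q 0)) := by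
    intro t ht
    show F (q (min t 1), q (max (t-1) 0)) = _
    rw [min_eq_left ht.2, max_eq_right (by linarith [ht.2] : t - 1 ≤ 0)]
  have hγ2 : ∀ t ∈ Set.Icc (0:ℝ) 1, γ (t+1) = ↑(μ (q 1) (q t)) := by
    intro t ht
    show F (q (min (t+1) 1), q (max (t+1-1) 0)) = _
    rw [min_eq_right (by linarith [ht.1] : (1:ℝ) ≤ t+1),
      show t+1-1 = t by ring, max_eq_left ht.1]
  -- chord bound
  have hchord : ∀ t ∈ Set.Icc (0:ℝ) 1, ‖γ t - γ (t+1)‖ ≤ d := by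
    intro t ht
    rw [hγ1 t ht, hγ2 t ht]
    have e : ‖(↑(μ (q t) (q 0)) : ℂ) - ↑(μ (q 1) (q t))‖ =
        dist (μ (q t) (q 0)) (μ (q 1) (q t)) := by
      rw [Subtype.dist_eq, Complex.dist_eq]
    rw [e, hsym (q t) (q 0)]
    calc dist (μ (q 0) (q t)) (μ (q 1) (q t))
        ≤ L * (dist (q 0) (q 1) + dist (q t) (q t)) := hlip _ _ _ _
      _ = L * ‖a - b‖ := by
          rw [dist_self, Subtype.dist_eq, q0, q1]
          simp [Complex.dist_eq]
      _ ≤ d := hsmall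
  -- the increment function
  set f : ℝ → ℝ := fun t => h (t+1) - h t with hfdef
  have hfcont : ContinuousOn f (Set.Icc 0 1) := by
    apply ContinuousOn.sub
    · apply hhcont.comp (continuous_id.add continuous_const).continuousOn
      intro t ht
      simp only [Set.mem_Icc, id_eq, Pi.add_apply] at ht ⊢
      exact ⟨by linarith [ht.1], by linarith [ht.2]⟩
    · exact hhcont.mono (Set.Icc_subset_Icc le_rfl (by norm_num))
  have hmem2 : ∀ t ∈ Set.Icc (0:ℝ) 1, t ∈ Set.Icc (0:ℝ) 2 :=
    fun t ht => ⟨ht.1, by linarith [ht.2]⟩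
  have hmem2' : ∀ t ∈ Set.Icc (0:ℝ) 1, t+1 ∈ Set.Icc (0:ℝ) 2 :=
    fun t ht => ⟨by linarith [ht.1], by linarith [ht.2]⟩
  have hcosf : ∀ t ∈ Set.Icc (0:ℝ) 1, (1:ℝ)/2 ≤ Real.cos (f t) := by
    intro t ht
    have huv : ‖(γ t - z₀) - (γ (t+1) - z₀)‖ ≤ d := by
      rw [sub_sub_sub_cancel_right]
      exact hchord t ht
    exact key_cos d hd0 (γ t - z₀) (γ (t+1) - z₀) (hγne t) (hγne (t+1))
      (hγd t) (hγd (t+1)) huv (h t) (h (t+1))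
      (hharg t (hmem2 t ht)) (hharg (t+1) (hmem2' t ht))
  set K : ℝ → ℤ := fun t => round (f t / (2*π)) with hKdef
  have hK : ∀ t ∈ Set.Icc (0:ℝ) 1, |f t - 2*π*(K t : ℤ)| ≤ π/3 :=
    fun t ht => cos_half_round _ (hcosf t ht)
  have hfapp : ∀ t : ℝ, f t = h (t+1) - h t := fun t => rfl
  clear_value f K
  -- the odd-multiple-of-π obstruction
  have hodd : ∀ (s : ℝ) (c : ℝ), s ∈ Set.Icc (0:ℝ) 1 → f s = c →
      (∃ m : ℤ, c = 2*π*(K 0) + π*(2*m+1)) → False := by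
    intro s c hs hfs ⟨m, hm⟩
    have := hK s hs
    rw [hfs, hm] at this
    have h2 : 2*π*(K 0) + π*(2*m+1) - 2*π*(K s) = π * (2*((K 0) + m - K s)+1) := by
      push_cast; ring
    rw [h2, abs_mul, abs_of_pos hπ] at this
    have h3 : (1:ℝ) ≤ |((2*((K 0) + m - K s)+1 : ℤ) : ℝ)| := by
      rw [← Int.cast_abs]
      exact_mod_cast Int.one_le_abs (by omega)
    push_cast at h3 this
    nlinarith
  -- K is constant
  have hKconst : ∀ t ∈ Set.Icc (0:ℝ) 1, K t = K 0 := by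
    intro t ht
    by_contra hne
    have h0m : (0:ℝ) ∈ Set.Icc (0:ℝ) 1 := ⟨le_rfl, by norm_num⟩
    rcases lt_or_gt_of_ne hne with hlt | hgt
    · -- K t < K 0 : value 2π K0 - π is between f t and f 0
      have hc : 2*π*(K 0) - π ∈ Set.Icc (f t) (f 0) := by
        constructor
        · have := hK t ht
          have hcast : ((K t : ℝ)) ≤ (K 0 : ℝ) - 1 := by exact_mod_cast Int.le_sub_one_of_lt hlt
          rw [abs_le] at this
          nlinarith [this.2, mul_le_mul_of_nonneg_left hcast (by positivity : (0:ℝ) ≤ 2*π)]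
        · have := hK 0 h0m
          rw [abs_le] at this
          linarith [this.1]
      obtain ⟨s, hs, hfs⟩ := intermediate_value_Icc' ht.1 (hfcont.mono
        (Set.Icc_subset_Icc le_rfl ht.2)) hc
      exact hodd s _ ⟨hs.1, le_trans hs.2 ht.2⟩ hfs ⟨-1, by push_cast; ring⟩
    · have hc : 2*π*(K 0) + π ∈ Set.Icc (f 0) (f t) := by
        constructor
        · have := hK 0 h0m
          rw [abs_le] at this
          linarith [this.2]
        · have := hK t ht
          have hcast : ((K 0 : ℝ)) + 1 ≤ (K t : ℝ) := by exact_mod_cast hgt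
          rw [abs_le] at this
          nlinarith [this.1, mul_le_mul_of_nonneg_left hcast (by positivity : (0:ℝ) ≤ 2*π)]
      obtain ⟨s, hs, hfs⟩ := intermediate_value_Icc ht.1 (hfcont.mono
        (Set.Icc_subset_Icc le_rfl ht.2)) hc
      exact hodd s _ ⟨hs.1, le_trans hs.2 ht.2⟩ hfs ⟨0, by push_cast; ring⟩
  -- conclude
  refine ⟨K 0, ?_⟩
  have h0m : (0:ℝ) ∈ Set.Icc (0:ℝ) 1 := ⟨le_rfl, by norm_num⟩
  have h1m : (1:ℝ) ∈ Set.Icc (0:ℝ) 1 := ⟨by norm_num, le_rfl⟩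
  have hf0 := hK 0 h0m
  have hf1 := hK 1 h1m
  rw [hKconst 1 h1m] at hf1
  have e1 : f 1 = h 2 - h 1 := by rw [hfapp]; norm_num
  have e0 : f 0 = h 1 - h 0 := by rw [hfapp]; norm_num
  have he : h 2 - h 0 - 4*π*(K 0) = (f 1 - 2*π*(K 0)) + (f 0 - 2*π*(K 0)) := by
    rw [e1, e0]; ring
  rw [he]
  calc |(f 1 - 2*π*(K 0)) + (f 0 - 2*π*(K 0))|
      ≤ |f 1 - 2*π*(K 0)| + |f 0 - 2*π*(K 0)| := abs_add_le _ _
    _ ≤ π/3 + π/3 := add_le_add hf1 hf0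
    _ = 2*π/3 := by ring
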